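/- arXiv:2506.07991 — 2 statements merged into one kernel-verified Lean document; each statement's English description precedes it below -/
import Mathlib

section
/- Let Γ be a finitely generated, virtually torsion-free, virtually FAR group, let T = τ(Γ) be its (finite) subgroup generated by all normal torsion subgroups, and let π : Γ → Γ/T be the quotient map. Then π(Fitt(Γ)) is contained in Fitt(Γ/T) and has finite index in Fitt(Γ/T). -/
/-- The pair of subgroups `K ≤ H` of `G` forms an *abelian factor of finite ranks*:
`K` is normal in `H`, the factor `H/K` is abelian, has finite torsion-free rank
(some `n` bounds the size of any independent family modulo `K`), and for every prime `p`
the `p`-torsion of `H/K` is finite (it is covered by finitely many cosets of `K`). -/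
def IsFARFactor {G : Type*} [Group G] (K H : Subgroup G) : Prop :=
  K ≤ H ∧
  (∀ x ∈ H, ∀ y ∈ K, x * y * x⁻¹ ∈ K) ∧
  (∀ x ∈ H, ∀ y ∈ H, x * y * x⁻¹ * y⁻¹ ∈ K) ∧
  (∃ n : ℕ, ∀ f : Fin (n + 1) → G, (∀ i, f i ∈ H) →
    ∃ c : Fin (n + 1) → ℤ, c ≠ 0 ∧ (List.ofFn fun i => f i ^ c i).prod ∈ K) ∧
  (∀ p : ℕ, p.Prime → ∃ F : Finset G, ∀ x ∈ H, x ^ p ∈ K → ∃ b ∈ F, b⁻¹ * x ∈ K)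

/-- A group has *finite abelian ranks* (is a FAR-group) if it admits a finite normal
series whose factors are abelian groups of finite torsion-free rank and finite `p`-rank
for every prime `p`. -/
def IsFARGroup (G : Type*) [Group G] : Prop :=
  ∃ (n : ℕ) (s : Fin (n + 1) → Subgroup G),
    s 0 = ⊥ ∧ s (Fin.last n) = ⊤ ∧ ∀ i : Fin n, IsFARFactor (s i.castSucc) (s i.succ)

/-- A group is virtually FAR if it has a finite-index subgroup which is a FAR-group. -/
def IsVirtuallyFAR (G : Type*) [Group G] : Prop :=
  ∃ H : Subgroup G, H.FiniteIndex ∧ IsFARGroup H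

/-- `τ(Γ)`: the subgroup generated by all normal torsion subgroups of `Γ`. -/
def tau (Γ : Type*) [Group Γ] : Subgroup Γ :=
  Subgroup.closure {g | ∃ N : Subgroup Γ, N.Normal ∧ (∀ x ∈ N, IsOfFinOrder x) ∧ g ∈ N}

instance tau.normal (Γ : Type*) [Group Γ] : (tau Γ).Normal := by
  constructor
  intro n hn g
  have himg : (⇑(MulAut.conj g).toMonoidHom) ''
      {x : Γ | ∃ N : Subgroup Γ, N.Normal ∧ (∀ y ∈ N, IsOfFinOrder y) ∧ x ∈ N} =
      {x : Γ | ∃ N : Subgroup Γ, N.Normal ∧ (∀ y ∈ N, IsOfFinOrder y) ∧ x ∈ N} := by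
    ext x
    constructor
    · rintro ⟨y, ⟨N, hN, hT, hy⟩, rfl⟩
      exact ⟨N, hN, hT, by simpa [MulAut.conj] using hN.conj_mem y hy g⟩
    · rintro ⟨N, hN, hT, hx⟩
      refine ⟨g⁻¹ * x * g, ⟨N, hN, hT, by simpa using hN.conj_mem x hx g⁻¹⟩, ?_⟩
      simp [MulAut.conj, mul_assoc]
  have hmem : g * n * g⁻¹ ∈ Subgroup.map (MulAut.conj g).toMonoidHom (tau Γ) :=
    ⟨n, hn, by simp [MulAut.conj]⟩
  rwa [tau, MonoidHom.map_closure, himg] at hmem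

/-- A monoid is torsion-free if no element other than `1` has finite order
(the old Mathlib definition, no longer present). -/
def Monoid.IsTorsionFree (G : Type*) [Monoid G] : Prop :=
  ∀ g : G, g ≠ 1 → ¬IsOfFinOrder g

/-- The Fitting subgroup: the subgroup generated by all nilpotent normal subgroups. -/
def Fitt (Γ : Type*) [Group Γ] : Subgroup Γ :=
  Subgroup.closure {g | ∃ N : Subgroup Γ, N.Normal ∧ Group.IsNilpotent N ∧ g ∈ N}


section FittingAux

variable {G : Type*} [Group G]

open scoped commutatorElement

/-- Auxiliary: sup of a family of normal subgroups is normal. -/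
lemma myISup_normal {ι : Sort*} (f : ι → Subgroup G) (h : ∀ i, (f i).Normal) :
    (⨆ i, f i).Normal := by
  constructor
  intro n hn g
  have key : (⨆ i, f i) ≤ Subgroup.comap ((MulAut.conj g).toMonoidHom) (⨆ i, f i) := by
    refine iSup_le fun i x hx => ?_
    simp only [Subgroup.mem_comap, MulEquiv.coe_toMonoidHom, MulAut.conj_apply]
    exact le_iSup f i ((h i).conj_mem x hx g)
  simpa using key hn

lemma myInf_normal (H K : Subgroup G) (hH : H.Normal) (hK : K.Normal) : (H ⊓ K).Normal :=
  ⟨fun n hn g => ⟨hH.conj_mem n hn.1 g, hK.conj_mem n hn.2 g⟩⟩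

/-- The lower central series of a subgroup, computed inside the ambient group. -/
def gsLCS (S : Subgroup G) : ℕ → Subgroup G
  | 0 => S
  | n + 1 => ⁅gsLCS S n, S⁆

lemma gsLCS_normal (S : Subgroup G) [hS : S.Normal] : ∀ n, (gsLCS S n).Normal := by
  intro n
  induction n with
  | zero => exact hS
  | succ n ih => exact @Subgroup.commutator_normal _ _ _ _ ih hS

lemma map_lcs_eq_gsLCS (S : Subgroup G) : ∀ n,
    Subgroup.map S.subtype (Subgroup.lowerCentralSeries (⊤ : Subgroup ↥S) n) = gsLCS S n := by
  intro n
  induction n with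
  | zero =>
    show Subgroup.map S.subtype ⊤ = S
    rw [← MonoidHom.range_eq_map, Subgroup.range_subtype]
  | succ n ih =>
    show Subgroup.map S.subtype ⁅Subgroup.lowerCentralSeries (⊤ : Subgroup ↥S) n, ⊤⁆ = ⁅gsLCS S n, S⁆
    rw [Subgroup.map_commutator, ih, ← MonoidHom.range_eq_map, Subgroup.range_subtype]

lemma gsLCS_eq_bot_of_le (S : Subgroup G) {c : ℕ} (hc : gsLCS S c = ⊥) :
    ∀ m, c ≤ m → gsLCS S m = ⊥ := by
  intro m hm
  obtain ⟨k, rfl⟩ := Nat.exists_eq_add_of_le hm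
  induction k with
  | zero => exact hc
  | succ k ih =>
    show ⁅gsLCS S (c + k), S⁆ = ⊥
    rw [ih (Nat.le_add_right _ _)]
    exact Subgroup.commutator_bot_left _

/-- Commutator bound via centralizer in the quotient. -/
lemma commutator_le_iff_le_comap (P C N : Subgroup G) [N.Normal] :
    ⁅P, C⁆ ≤ N ↔ P ≤ Subgroup.comap (QuotientGroup.mk' N)
      (Subgroup.centralizer ((QuotientGroup.mk' N) '' (C : Set G))) := by
  rw [Subgroup.commutator_le]
  constructor
  · intro h p hp
    rw [Subgroup.mem_comap, Subgroup.mem_centralizer_iff]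
    rintro _ ⟨c, hc, rfl⟩
    have h1 : (QuotientGroup.mk' N) ⁅p, c⁆ = 1 := (QuotientGroup.eq_one_iff _).mpr (h p hp c hc)
    rw [map_commutatorElement, commutatorElement_eq_one_iff_mul_comm] at h1
    exact h1.symm
  · intro h p hp c hc
    have h1 := (Subgroup.mem_centralizer_iff.mp (h hp)) _ ⟨c, hc, rfl⟩
    rw [← QuotientGroup.eq_one_iff (N := N)]
    show (QuotientGroup.mk' N) ⁅p, c⁆ = 1
    rw [map_commutatorElement, commutatorElement_eq_one_iff_mul_comm]
    exact h1.symm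

/-- Fitting's theorem: the join of two nilpotent normal subgroups is nilpotent. -/
lemma fitting_sup_nilpotent (H K : Subgroup G) [hHn : H.Normal] [hKn : K.Normal]
    (hH : Group.IsNilpotent ↥H) (hK : Group.IsNilpotent ↥K) :
    Group.IsNilpotent ↥(H ⊔ K) := by
  obtain ⟨c, hc⟩ := nilpotent_iff_lowerCentralSeries.mp hH
  obtain ⟨d, hd⟩ := nilpotent_iff_lowerCentralSeries.mp hK
  have hcG : gsLCS H c = ⊥ := by rw [← map_lcs_eq_gsLCS, hc, Subgroup.map_bot]
  have hdG : gsLCS K d = ⊥ := by rw [← map_lcs_eq_gsLCS, hd, Subgroup.map_bot]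
  -- the bounding series
  let B : ℕ → Subgroup G := fun n =>
    gsLCS H n ⊔ (gsLCS K n ⊔
      ⨆ (p : ℕ × ℕ) (_ : p.1 + p.2 + 1 = n), (gsLCS H p.1 ⊓ gsLCS K p.2))
  have hBnormal : ∀ n, (B n).Normal := by
    intro n
    haveI h1 := gsLCS_normal H n
    haveI h2 : (gsLCS K n ⊔
        ⨆ (p : ℕ × ℕ) (_ : p.1 + p.2 + 1 = n), (gsLCS H p.1 ⊓ gsLCS K p.2)).Normal := by
      haveI := gsLCS_normal K n
      haveI : (⨆ (p : ℕ × ℕ) (_ : p.1 + p.2 + 1 = n),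
          (gsLCS H p.1 ⊓ gsLCS K p.2)).Normal := by
        refine myISup_normal _ fun p => myISup_normal _ fun _ => ?_
        exact myInf_normal _ _ (gsLCS_normal H p.1) (gsLCS_normal K p.2)
      exact Subgroup.sup_normal _ _
    exact Subgroup.sup_normal _ _
  -- commutator estimates against H and K push B n into B (n+1)
  have hstep : ∀ n, ⁅B n, H ⊔ K⁆ ≤ B (n + 1) := by
    intro n
    haveI := hBnormal (n + 1)
    rw [commutator_le_iff_le_comap]
    have hcomp : ∀ X : Subgroup G, ⁅X, H⁆ ≤ B (n + 1) → ⁅X, K⁆ ≤ B (n + 1) →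
        X ≤ Subgroup.comap (QuotientGroup.mk' (B (n + 1)))
          (Subgroup.centralizer ((QuotientGroup.mk' (B (n + 1))) '' ((H ⊔ K : Subgroup G) : Set G))) := by
      intro X hXH hXK
      rw [← commutator_le_iff_le_comap, Subgroup.commutator_comm]
      rw [Subgroup.commutator_comm] at hXH hXK
      rw [commutator_le_iff_le_comap] at hXH hXK ⊢
      exact sup_le hXH hXK
    -- mixed-term helper inclusions into B (n+1)
    have hmixed : ∀ i j : ℕ, i + j + 1 = n + 1 → gsLCS H i ⊓ gsLCS K j ≤ B (n + 1) := by
      intro i j hij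
      refine le_trans ?_ (le_sup_of_le_right le_sup_right)
      exact le_iSup₂_of_le (i, j) hij le_rfl
    refine sup_le (hcomp _ ?_ ?_) (sup_le (hcomp _ ?_ ?_) ?_)
    · -- ⁅gsLCS H n, H⁆ = gsLCS H (n+1)
      exact le_sup_of_le_left (le_of_eq rfl)
    · -- ⁅gsLCS H n, K⁆ ≤ gsLCS H n ⊓ gsLCS K 0
      haveI := gsLCS_normal H n
      refine le_trans (le_inf (Subgroup.commutator_le_left _ _) (Subgroup.commutator_le_right _ _)) ?_
      exact hmixed n 0 (by omega)
    · -- ⁅gsLCS K n, H⁆ ≤ gsLCS H 0 ⊓ gsLCS K n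
      haveI := gsLCS_normal K n
      refine le_trans (le_inf (Subgroup.commutator_le_right _ _) (Subgroup.commutator_le_left _ _)) ?_
      exact hmixed 0 n (by omega)
    · -- ⁅gsLCS K n, K⁆ = gsLCS K (n+1)
      exact le_sup_of_le_right (le_sup_of_le_left (le_of_eq rfl))
    · -- mixed terms
      refine iSup_le fun p => iSup_le fun hp => hcomp _ ?_ ?_
      · haveI := gsLCS_normal K p.2
        refine le_trans (le_inf (Subgroup.commutator_mono inf_le_left le_rfl)
          (le_trans (Subgroup.commutator_mono inf_le_right le_rfl)
            (Subgroup.commutator_le_left _ _))) ?_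
        exact hmixed (p.1 + 1) p.2 (by omega)
      · haveI := gsLCS_normal H p.1
        refine le_trans (le_inf
          (le_trans (Subgroup.commutator_mono inf_le_left le_rfl)
            (Subgroup.commutator_le_left _ _))
          (Subgroup.commutator_mono inf_le_right le_rfl)) ?_
        exact hmixed p.1 (p.2 + 1) (by omega)
  have hmain : ∀ n, gsLCS (H ⊔ K) n ≤ B n := by
    intro n
    induction n with
    | zero => exact sup_le (le_sup_of_le_left le_rfl) (le_sup_of_le_right le_sup_left)
    | succ n ih =>
      calc gsLCS (H ⊔ K) (n + 1) = ⁅gsLCS (H ⊔ K) n, H ⊔ K⁆ := rfl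
        _ ≤ ⁅B n, H ⊔ K⁆ := Subgroup.commutator_mono ih le_rfl
        _ ≤ B (n + 1) := hstep n
  have hbot : B (c + d) ≤ ⊥ := by
    refine sup_le ?_ (sup_le ?_ ?_)
    · rw [gsLCS_eq_bot_of_le H hcG (c + d) (Nat.le_add_right _ _)]
    · rw [gsLCS_eq_bot_of_le K hdG (c + d) (Nat.le_add_left _ _)]
    · refine iSup_le fun p => iSup_le fun hp => ?_
      rcases le_or_gt c p.1 with h | h
      · rw [gsLCS_eq_bot_of_le H hcG p.1 h]
        exact inf_le_left
      · rw [gsLCS_eq_bot_of_le K hdG p.2 (by omega)]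
        exact inf_le_right
  have hfin : Subgroup.lowerCentralSeries (⊤ : Subgroup ↥(H ⊔ K)) (c + d) = ⊥ := by
    have := le_bot_iff.mp (le_trans (hmain (c + d)) hbot)
    rw [← map_lcs_eq_gsLCS] at this
    exact (Subgroup.map_eq_bot_iff_of_injective _ (Subgroup.subtype_injective _)).mp this
  exact nilpotent_iff_lowerCentralSeries.mpr ⟨c + d, hfin⟩

end FittingAux

/-- For a finitely generated, virtually torsion-free, virtually FAR group `Γ` with
`T = τ(Γ)` finite and quotient map `π : Γ → Γ/T`, the image `π(Fitt(Γ))` is contained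
in `Fitt(Γ/T)` and has finite index in `Fitt(Γ/T)`. -/
theorem image_fitting_finiteIndex_in_fitting_quotient
    {Γ : Type*} [Group Γ] (hfg : Group.FG Γ)
    (hvtf : ∃ H : Subgroup Γ, H.FiniteIndex ∧ Monoid.IsTorsionFree H)
    (hFAR : IsVirtuallyFAR Γ)
    (hTfin : (tau Γ : Set Γ).Finite) :
    Subgroup.map (QuotientGroup.mk' (tau Γ)) (Fitt Γ) ≤ Fitt (Γ ⧸ tau Γ) ∧
      (Subgroup.map (QuotientGroup.mk' (tau Γ)) (Fitt Γ)).relIndex (Fitt (Γ ⧸ tau Γ)) ≠ 0 := by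
  classical
  set π := QuotientGroup.mk' (tau Γ) with hπdef
  have hπs : Function.Surjective π := QuotientGroup.mk'_surjective (tau Γ)
  -- Part 1: the image of the Fitting subgroup is contained in the Fitting subgroup
  have h1 : Subgroup.map π (Fitt Γ) ≤ Fitt (Γ ⧸ tau Γ) := by
    rw [Fitt, Fitt, MonoidHom.map_closure]
    refine Subgroup.closure_mono ?_
    rintro _ ⟨g, ⟨N, hN, hnil, hg⟩, rfl⟩
    refine ⟨N.map π, hN.map π hπs, ?_, ⟨g, hg, rfl⟩⟩
    haveI := hnil
    exact nilpotent_of_surjective (π.subgroupMap N) (π.subgroupMap_surjective N)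
  -- The centralizer of the finite normal subgroup `tau Γ`
  set D := Subgroup.centralizer ((tau Γ : Subgroup Γ) : Set Γ) with hDdef
  haveI hDn : D.Normal := by
    constructor
    intro n hn g
    rw [hDdef, Subgroup.mem_centralizer_iff] at hn ⊢
    intro h hh
    have hh' : g⁻¹ * h * g ∈ ((tau Γ : Subgroup Γ) : Set Γ) := by
      have := (tau.normal Γ).conj_mem h hh g⁻¹
      simpa using this
    have hcomm := hn _ hh'
    calc h * (g * n * g⁻¹) = g * ((g⁻¹ * h * g) * n) * g⁻¹ := by group
      _ = g * (n * (g⁻¹ * h * g)) * g⁻¹ := by rw [hcomm]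
      _ = (g * n * g⁻¹) * h := by group
  -- D has finite index since `tau Γ` is finite
  haveI hTfinite : Finite ↥(tau Γ) := hTfin.to_subtype
  haveI : Finite (MulAut ↥(tau Γ)) :=
    Finite.of_injective (fun e : MulAut ↥(tau Γ) => (e : ↥(tau Γ) → ↥(tau Γ)))
      DFunLike.coe_injective
  have hkerD : (MulAut.conjNormal : Γ →* MulAut ↥(tau Γ)).ker ≤ D := by
    intro g hg
    rw [MonoidHom.mem_ker] at hg
    rw [hDdef, Subgroup.mem_centralizer_iff]
    intro t ht
    have h2 : ((MulAut.conjNormal g : MulAut ↥(tau Γ)) ⟨t, ht⟩ : Γ) = g * t * g⁻¹ :=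
      MulAut.conjNormal_apply g ⟨t, ht⟩
    rw [hg] at h2
    have h3 : t = g * t * g⁻¹ := by simpa using h2
    calc t * g = (g * t * g⁻¹) * g := by rw [← h3]
      _ = g * t := by group
  have hDindex : D.index ≠ 0 := by
    have hdvd := Subgroup.index_dvd_of_le hkerD
    intro h0
    rw [h0] at hdvd
    exact (Subgroup.finiteIndex_ker (MulAut.conjNormal : Γ →* MulAut ↥(tau Γ))).index_ne_zero
      (zero_dvd_iff.mp hdvd)
  -- every element of the Fitting subgroup of the quotient lies in a nilpotent normal subgroup
  have hFitt_mem : ∀ x ∈ Fitt (Γ ⧸ tau Γ),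
      ∃ N : Subgroup (Γ ⧸ tau Γ), N.Normal ∧ Group.IsNilpotent ↥N ∧ x ∈ N := by
    let U : Subgroup (Γ ⧸ tau Γ) :=
      { carrier := {x | ∃ N : Subgroup (Γ ⧸ tau Γ), N.Normal ∧ Group.IsNilpotent ↥N ∧ x ∈ N}
        one_mem' := ⟨⊥, inferInstance, inferInstance, one_mem ⊥⟩
        mul_mem' := by
          rintro a b ⟨N₁, h₁, n₁, ha⟩ ⟨N₂, h₂, n₂, hb⟩
          haveI := h₁; haveI := h₂
          exact ⟨N₁ ⊔ N₂, Subgroup.sup_normal _ _, fitting_sup_nilpotent _ _ n₁ n₂,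
            mul_mem (SetLike.le_def.mp le_sup_left ha) (SetLike.le_def.mp le_sup_right hb)⟩
        inv_mem' := by
          rintro a ⟨N, h, n, ha⟩
          exact ⟨N, h, n, inv_mem ha⟩ }
    intro x hx
    exact (Subgroup.closure_le U).mpr (fun g hg => hg) hx
  -- the key inclusion
  have hkey : Subgroup.map π D ⊓ Fitt (Γ ⧸ tau Γ) ≤ Subgroup.map π (Fitt Γ) := by
    rintro x ⟨hxD, hxF⟩
    obtain ⟨Nb, hNb, hnilNb, hxNb⟩ := hFitt_mem x hxF
    obtain ⟨g, hgD, rfl⟩ := hxD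
    set C : Subgroup Γ := D ⊓ Subgroup.comap π Nb with hC
    haveI hCn : C.Normal := myInf_normal _ _ hDn (hNb.comap π)
    have hCnil : Group.IsNilpotent ↥C := by
      have hmem : ∀ c : ↥C, (π.comp C.subtype) c ∈ Nb := fun c => c.2.2
      haveI := hnilNb
      refine isNilpotent_of_ker_le_center ((π.comp C.subtype).codRestrict Nb hmem) ?_
      intro c hcker
      rw [MonoidHom.ker_codRestrict, MonoidHom.mem_ker] at hcker
      have hcT : (c : Γ) ∈ tau Γ := (QuotientGroup.eq_one_iff ((c : Γ))).mp hcker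
      rw [Subgroup.mem_center_iff]
      intro z
      have hz := Subgroup.mem_centralizer_iff.mp z.2.1 (c : Γ) hcT
      apply Subtype.ext
      simpa using hz.symm
    have hgC : g ∈ C := ⟨hgD, hxNb⟩
    exact ⟨g, Subgroup.subset_closure ⟨C, hCn, hCnil, hgC⟩, rfl⟩
  -- conclude
  refine ⟨h1, ?_⟩
  haveI : (Subgroup.map π D).Normal := hDn.map π hπs
  have hrel1 : (Subgroup.map π D).relIndex (Fitt (Γ ⧸ tau Γ)) ≠ 0 := by
    have hdvd1 := Subgroup.relIndex_dvd_index_of_normal (Subgroup.map π D) (Fitt (Γ ⧸ tau Γ))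
    have hdvd2 := Subgroup.index_map_dvd D hπs
    intro h0
    rw [h0] at hdvd1
    rw [zero_dvd_iff.mp hdvd1] at hdvd2
    exact hDindex (zero_dvd_iff.mp hdvd2)
  have hdvd := Subgroup.relIndex_dvd_of_le_left (Fitt (Γ ⧸ tau Γ)) hkey
  rw [Subgroup.inf_relIndex_right] at hdvd
  intro h0
  rw [h0] at hdvd
  exact hrel1 (zero_dvd_iff.mp hdvd)
end

section
/- Let Γ be a finitely generated, virtually torsion-free, virtually FAR group with T = τ(Γ) finite, and let Γ₀ be a characteristic, torsion-free subgroup of finite index in Γ with Γ₀ ∩ T = {1}. Write Γ̂ = Γ/T and Γ̂₀ for the image of Γ₀ in Γ̂. Then every automorphism of Γ̂ that induces the identity automorphism of Γ̂/Γ̂₀ is induced by an automorphism of Γ that induces the identity automorphism of Γ/Γ₀; consequently, the natural homomorphism Aut(Γ) → Aut(Γ̂) has image of finite index in Aut(Γ̂). -/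
section AuxLift

variable {Γ : Type*} [Group Γ]

/-- Auxiliary: given `ψ` an automorphism of `Γ ⧸ T` which moves every element within the
image of `Γ₀`, there is a multiplicative self-map of `Γ` lifting `ψ` and moving every
element within `Γ₀`. -/
theorem tau_lift_fun (T Γ₀ : Subgroup Γ) [T.Normal]
    (hnorm : Γ₀.Normal) (hdisj : Γ₀ ⊓ T = ⊥) (ψ : MulAut (Γ ⧸ T))
    (hψ : ∀ x : Γ ⧸ T, ψ x * x⁻¹ ∈ Subgroup.map (QuotientGroup.mk' T) Γ₀) :
    ∃ f : Γ → Γ, (∀ x y, f (x * y) = f x * f y) ∧ (∀ x, f x * x⁻¹ ∈ Γ₀) ∧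
      (∀ x, (QuotientGroup.mk' T) (f x) = ψ (QuotientGroup.mk' T x)) := by
  have key : ∀ a b : Γ, a * b⁻¹ ∈ Γ₀ →
      QuotientGroup.mk' T a = QuotientGroup.mk' T b → a = b := by
    intro a b h1 h2
    have hT : a⁻¹ * b ∈ T := by
      rwa [QuotientGroup.mk'_apply, QuotientGroup.mk'_apply, QuotientGroup.eq] at h2
    have hg : a⁻¹ * b ∈ Γ₀ := by
      have := hnorm.conj_mem _ (Γ₀.inv_mem h1) b⁻¹
      rwa [show b⁻¹ * (a * b⁻¹)⁻¹ * b⁻¹⁻¹ = a⁻¹ * b by group] at this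
    have hmem : a⁻¹ * b ∈ Γ₀ ⊓ T := ⟨hg, hT⟩
    rw [hdisj, Subgroup.mem_bot, inv_mul_eq_one] at hmem
    exact hmem
  have ex : ∀ x : Γ, ∃ g, g ∈ Γ₀ ∧ (QuotientGroup.mk' T) g =
      ψ (QuotientGroup.mk' T x) * (QuotientGroup.mk' T x)⁻¹ := by
    intro x
    obtain ⟨g, hg, hge⟩ := hψ (QuotientGroup.mk' T x)
    exact ⟨g, hg, hge⟩
  choose g hg1 hg2 using ex
  refine ⟨fun x => g x * x, ?_, ?_, ?_⟩
  · intro x y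
    have hmem : g x * (x * g y * x⁻¹) ∈ Γ₀ :=
      Γ₀.mul_mem (hg1 x) (hnorm.conj_mem _ (hg1 y) x)
    have hmem2 : g (x * y) * (g x * (x * g y * x⁻¹))⁻¹ ∈ Γ₀ :=
      Γ₀.mul_mem (hg1 (x * y)) (Γ₀.inv_mem hmem)
    have heq : QuotientGroup.mk' T (g (x * y)) =
        QuotientGroup.mk' T (g x * (x * g y * x⁻¹)) := by
      simp only [map_mul, map_inv, hg2]
      group
    have h := key _ _ hmem2 heq
    show g (x * y) * (x * y) = (g x * x) * (g y * y)
    rw [h]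
    group
  · intro x
    have := hg1 x
    rwa [show (g x : Γ) = g x * x * x⁻¹ by group] at this
  · intro x
    rw [map_mul, hg2]
    group

/-- A finitely generated group has only finitely many homomorphisms into a finite monoid. -/
theorem finite_monoidHom_of_fg {G : Type*} {S : Type*} [Group G] [Group.FG G]
    [Monoid S] [Finite S] : Finite (G →* S) := by
  classical
  obtain ⟨Sg, hSg1, hSg2⟩ := Group.fg_iff.mp (inferInstance : Group.FG G)
  haveI := hSg2.to_subtype
  refine Finite.of_injective (fun (f : G →* S) (x : Sg) => f (x : G)) ?_
  intro f1 f2 h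
  refine MonoidHom.eq_of_eqOn_dense hSg1 ?_
  intro x hx
  exact congrFun h ⟨x, hx⟩

end AuxLift

/-- Let `Γ` be a finitely generated, virtually torsion-free, virtually FAR group with
`T = τ(Γ)` finite, and let `Γ₀` be a characteristic torsion-free finite-index subgroup
of `Γ` with `Γ₀ ∩ T = 1`. Write `Γ̂ = Γ/T`, `π : Γ → Γ̂` and `Γ̂₀ = π(Γ₀)`. Then every
automorphism of `Γ̂` inducing the identity on `Γ̂/Γ̂₀` lifts to an automorphism of `Γ`
inducing the identity on `Γ/Γ₀`; consequently the image of the natural map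
`Aut(Γ) → Aut(Γ̂)` contains a finite-index subgroup of `Aut(Γ̂)`. -/
theorem lift_automorphisms_of_quotient_by_tau
    {Γ : Type*} [Group Γ] (hfg : Group.FG Γ)
    (hvtf : ∃ H : Subgroup Γ, H.FiniteIndex ∧ Monoid.IsTorsionFree H)
    (hFAR : IsVirtuallyFAR Γ)
    (hTfin : (tau Γ : Set Γ).Finite)
    (Γ₀ : Subgroup Γ) (hchar : Γ₀.Characteristic) (htf : Monoid.IsTorsionFree Γ₀)
    (hfi : Γ₀.FiniteIndex) (hdisj : Γ₀ ⊓ tau Γ = ⊥) :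
    (∀ ψ : MulAut (Γ ⧸ tau Γ),
      (∀ x : Γ ⧸ tau Γ, ψ x * x⁻¹ ∈ Subgroup.map (QuotientGroup.mk' (tau Γ)) Γ₀) →
      ∃ φ : MulAut Γ, (∀ x : Γ, φ x * x⁻¹ ∈ Γ₀) ∧
        ∀ x : Γ, ψ (QuotientGroup.mk' (tau Γ) x) = QuotientGroup.mk' (tau Γ) (φ x)) ∧
    (∃ H : Subgroup (MulAut (Γ ⧸ tau Γ)), H.FiniteIndex ∧
      ∀ ψ ∈ H, ∃ φ : MulAut Γ,
        ∀ x : Γ, ψ (QuotientGroup.mk' (tau Γ) x) = QuotientGroup.mk' (tau Γ) (φ x)) := by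
  classical
  haveI := hfg
  haveI := hchar
  have hnorm : Γ₀.Normal := inferInstance
  -- Part 1: lifting automorphisms
  have part1 : ∀ ψ : MulAut (Γ ⧸ tau Γ),
      (∀ x : Γ ⧸ tau Γ, ψ x * x⁻¹ ∈ Subgroup.map (QuotientGroup.mk' (tau Γ)) Γ₀) →
      ∃ φ : MulAut Γ, (∀ x : Γ, φ x * x⁻¹ ∈ Γ₀) ∧
        ∀ x : Γ, ψ (QuotientGroup.mk' (tau Γ) x) = QuotientGroup.mk' (tau Γ) (φ x) := by
    intro ψ hψ
    have hψinv : ∀ x : Γ ⧸ tau Γ,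
        ψ⁻¹ x * x⁻¹ ∈ Subgroup.map (QuotientGroup.mk' (tau Γ)) Γ₀ := by
      intro x
      have h := (Subgroup.map (QuotientGroup.mk' (tau Γ)) Γ₀).inv_mem (hψ (ψ⁻¹ x))
      rwa [show (ψ (ψ⁻¹ x) * (ψ⁻¹ x)⁻¹)⁻¹ = ψ⁻¹ x * x⁻¹ by
        rw [MulAut.apply_inv_self]; group] at h
    obtain ⟨f, hfmul, hf0, hfπ⟩ := tau_lift_fun (tau Γ) Γ₀ hnorm hdisj ψ hψ
    obtain ⟨f', hf'mul, hf'0, hf'π⟩ := tau_lift_fun (tau Γ) Γ₀ hnorm hdisj ψ⁻¹ hψinv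
    have cancel : ∀ (u : MulAut (Γ ⧸ tau Γ)) (F F' : Γ → Γ),
        (∀ x, F x * x⁻¹ ∈ Γ₀) → (∀ x, F' x * x⁻¹ ∈ Γ₀) →
        (∀ x, (QuotientGroup.mk' (tau Γ)) (F x) = u (QuotientGroup.mk' (tau Γ) x)) →
        (∀ x, (QuotientGroup.mk' (tau Γ)) (F' x) = u⁻¹ (QuotientGroup.mk' (tau Γ) x)) →
        ∀ x, F' (F x) = x := by
      intro u F F' hF0 hF'0 hFπ hF'π x
      have hm : F' (F x) * x⁻¹ ∈ Γ₀ := by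
        have h := Γ₀.mul_mem (hF'0 (F x)) (hF0 x)
        rwa [show F' (F x) * (F x)⁻¹ * (F x * x⁻¹) = F' (F x) * x⁻¹ by group] at h
      have hT : (F' (F x))⁻¹ * x ∈ tau Γ := by
        have hq : QuotientGroup.mk' (tau Γ) (F' (F x)) = QuotientGroup.mk' (tau Γ) x := by
          rw [hF'π, hFπ, MulAut.inv_apply_self]
        rwa [QuotientGroup.mk'_apply, QuotientGroup.mk'_apply, QuotientGroup.eq] at hq
      have hg : (F' (F x))⁻¹ * x ∈ Γ₀ := by
        have h := hnorm.conj_mem _ (Γ₀.inv_mem hm) x⁻¹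
        rwa [show x⁻¹ * (F' (F x) * x⁻¹)⁻¹ * x⁻¹⁻¹ = (F' (F x))⁻¹ * x by group] at h
      have hmem : (F' (F x))⁻¹ * x ∈ Γ₀ ⊓ tau Γ := ⟨hg, hT⟩
      rw [hdisj, Subgroup.mem_bot, inv_mul_eq_one] at hmem
      exact hmem
    refine ⟨MulEquiv.mk ⟨f, f', cancel ψ f f' hf0 hf'0 hfπ hf'π,
      cancel ψ⁻¹ f' f hf'0 hf0 hf'π (fun x => by rw [inv_inv]; exact hfπ x)⟩
      (fun x y => hfmul x y), fun x => hf0 x, fun x => (hfπ x).symm⟩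
  refine ⟨part1, ?_⟩
  -- Part 2
  haveI : Group.FG (Γ ⧸ tau Γ) := QuotientGroup.fg _
  haveI hMfi : (Subgroup.map (QuotientGroup.mk' (tau Γ)) Γ₀).FiniteIndex := by
    refine ⟨fun h0 => hfi.index_ne_zero ?_⟩
    exact zero_dvd_iff.mp (h0 ▸ Γ₀.index_map_dvd (QuotientGroup.mk'_surjective (tau Γ)))
  set M := Subgroup.map (QuotientGroup.mk' (tau Γ)) Γ₀ with hMdef
  haveI : Finite ((Γ ⧸ tau Γ) ⧸ M) := inferInstance
  haveI hhomfin : Finite ((Γ ⧸ tau Γ) →* Equiv.Perm ((Γ ⧸ tau Γ) ⧸ M)) :=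
    finite_monoidHom_of_fg
  set K := ⨅ f : (Γ ⧸ tau Γ) →* Equiv.Perm ((Γ ⧸ tau Γ) ⧸ M), f.ker with hKdef
  have hKnorm : K.Normal := by
    constructor
    intro n hn gq
    refine Subgroup.mem_iInf.mpr fun f => ?_
    have h := Subgroup.mem_iInf.mp hn f
    rw [MonoidHom.mem_ker] at h ⊢
    rw [map_mul, map_mul, h, mul_one, map_inv, mul_inv_cancel]
  haveI := hKnorm
  have hKchar : ∀ (a : MulAut (Γ ⧸ tau Γ)) (k : Γ ⧸ tau Γ), k ∈ K → a k ∈ K := by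
    intro a k hk
    refine Subgroup.mem_iInf.mpr fun f => ?_
    have h := Subgroup.mem_iInf.mp hk (f.comp a.toMonoidHom)
    rw [MonoidHom.mem_ker] at h ⊢
    simpa using h
  haveI := hhomfin
  have hKfi : K.FiniteIndex := Subgroup.finiteIndex_iInf fun f => Subgroup.finiteIndex_ker f
  have hKle : K ≤ M := by
    refine le_trans (iInf_le _ (MulAction.toPermHom (Γ ⧸ tau Γ) ((Γ ⧸ tau Γ) ⧸ M))) ?_
    rw [← Subgroup.normalCore_eq_ker]
    exact Subgroup.normalCore_le M
  set HH : Subgroup (MulAut (Γ ⧸ tau Γ)) :=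
    { carrier := {a | ∀ x, a x * x⁻¹ ∈ K}
      one_mem' := by intro x; simpa using K.one_mem
      mul_mem' := by
        intro a b ha hb x
        have h := K.mul_mem (ha (b x)) (hb x)
        rwa [show a (b x) * (b x)⁻¹ * (b x * x⁻¹) = a (b x) * x⁻¹ by group,
          ← MulAut.mul_apply] at h
      inv_mem' := by
        intro a ha x
        have h := K.inv_mem (ha (a⁻¹ x))
        rwa [show (a (a⁻¹ x) * (a⁻¹ x)⁻¹)⁻¹ = a⁻¹ x * x⁻¹ by
          rw [MulAut.apply_inv_self]; group] at h } with hHHdef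
  have hwd : ∀ a b : MulAut (Γ ⧸ tau Γ), a⁻¹ * b ∈ HH →
      (QuotientGroup.mk' K).comp a.toMonoidHom = (QuotientGroup.mk' K).comp b.toMonoidHom := by
    intro a b hab
    refine MonoidHom.ext fun x => ?_
    show QuotientGroup.mk' K (a x) = QuotientGroup.mk' K (b x)
    rw [QuotientGroup.mk'_apply, QuotientGroup.mk'_apply, QuotientGroup.eq]
    have hk : (a⁻¹ * b) x * x⁻¹ ∈ K := hab x
    have hconj : x⁻¹ * ((a⁻¹ * b) x * x⁻¹) * x ∈ K := by
      have h := hKnorm.conj_mem _ hk x⁻¹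
      rwa [show x⁻¹ * ((a⁻¹ * b) x * x⁻¹) * x⁻¹⁻¹ = x⁻¹ * ((a⁻¹ * b) x * x⁻¹) * x by
        group] at h
    have h := hKchar a _ hconj
    rwa [show a (x⁻¹ * ((a⁻¹ * b) x * x⁻¹) * x) = (a x)⁻¹ * b x by
      simp [map_mul, map_inv, MulAut.mul_apply, MulAut.apply_inv_self, mul_assoc]] at h
  haveI : Finite ((Γ ⧸ tau Γ) ⧸ K) := inferInstance
  haveI : Finite ((Γ ⧸ tau Γ) →* ((Γ ⧸ tau Γ) ⧸ K)) := finite_monoidHom_of_fg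
  haveI : Finite (MulAut (Γ ⧸ tau Γ) ⧸ HH) := by
    refine Finite.of_injective
      (Quotient.lift (fun a : MulAut (Γ ⧸ tau Γ) => (QuotientGroup.mk' K).comp a.toMonoidHom)
        (fun a b h => hwd a b (QuotientGroup.leftRel_apply.mp h))) ?_
    intro q1 q2
    refine Quotient.inductionOn₂ q1 q2 ?_
    intro a b h
    refine Quotient.sound (QuotientGroup.leftRel_apply.mpr ?_)
    intro x
    have hx : QuotientGroup.mk' K (a x) = QuotientGroup.mk' K (b x) := DFunLike.congr_fun h x
    rw [QuotientGroup.mk'_apply, QuotientGroup.mk'_apply, QuotientGroup.eq] at hx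
    have h2 := hKchar a⁻¹ _ hx
    have h3 := hKnorm.conj_mem _ h2 x
    rwa [show x * (a⁻¹ ((a x)⁻¹ * b x)) * x⁻¹ = (a⁻¹ * b) x * x⁻¹ by
      simp [map_mul, map_inv, MulAut.mul_apply, MulAut.inv_apply_self, mul_assoc]] at h3
  refine ⟨HH, Subgroup.finiteIndex_of_finite_quotient (H := HH), ?_⟩
  intro ψ hψ
  obtain ⟨φ, _, hφ⟩ := part1 ψ (fun x => hKle (hψ x))
  exact ⟨φ, hφ⟩
end
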